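/- Let (x_k)_{k∈ℕ} be a deterministic sequence of integers with x_0 = 0, |x_{k+1} − x_k| = 1 for all k, and x_k → +∞ as k → ∞. For n ≥ 1 let T_n := inf{k ≥ 0 : x_k = n} (which is finite for every n). Suppose there exist C > 0 and n_1 such that for all n ≥ n_1 and all k ≥ 0 one has x_{T_n + k} ≥ n − C log n. Then for any a > 0: lim_{n→∞} (log T_n)/(log n) = 1/a if and only if lim_{n→∞} (log x_n)/(log n) = a. -/

import Mathlib

open Filter


private lemma aux_log_ratio (u : ℕ → ℝ)
    (h : Tendsto (fun n => u n / n) atTop (nhds 1)) :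
    Tendsto (fun n => Real.log (u n) / Real.log n) atTop (nhds 1) := by
  have hlogn : Tendsto (fun n : ℕ => Real.log n) atTop atTop :=
    Real.tendsto_log_atTop.comp tendsto_natCast_atTop_atTop
  have h0 : Tendsto (fun n : ℕ => Real.log (u n / n)) atTop (nhds 0) := by
    have := (Real.continuousAt_log one_ne_zero).tendsto.comp h
    simpa [Function.comp_def] using this
  have h1 : Tendsto (fun n : ℕ => Real.log (u n / n) / Real.log n) atTop (nhds 0) :=
    h0.div_atTop hlogn
  have key : ∀ᶠ n : ℕ in atTop,
      1 + Real.log (u n / n) / Real.log n = Real.log (u n) / Real.log n := by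
    filter_upwards [h.eventually (eventually_gt_nhds (by norm_num : (1:ℝ)/2 < 1)),
      eventually_ge_atTop 2] with n hn hn2
    have hnpos : (0:ℝ) < n := by
      have : (2:ℝ) ≤ n := by exact_mod_cast hn2
      linarith
    have hun : 0 < u n := by
      have h' : (0:ℝ) < u n / n := lt_trans (by norm_num) hn
      exact (div_pos_iff.mp h').elim (fun h => h.1) (fun h => absurd h.2 (by linarith))
    have hlognpos : 0 < Real.log n := Real.log_pos (by
      have : (2:ℝ) ≤ n := by exact_mod_cast hn2
      linarith)
    rw [Real.log_div (ne_of_gt hun) (ne_of_gt hnpos)]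
    field_simp
    ring
  have := (tendsto_const_nhds (x := (1:ℝ)) (f := atTop (α := ℕ))).add h1
  simp only [add_zero] at this
  exact this.congr' key


/-- **Inversion of the scaling of hitting times (deterministic version).**
Let `(x_k)` be a nearest-neighbor path on `ℤ` with `x 0 = 0` tending to `+∞`, and
`T n := inf {k : x k = n}`. If for some `C > 0` and all large `n` one has
`x_{T_n + k} ≥ n - C log n` for all `k ≥ 0`, then for any `a > 0`,
`log T_n / log n → 1/a` if and only if `log x_n / log n → a`. -/
theorem hitting_time_scaling_inversion
    (x : ℕ → ℤ) (hx0 : x 0 = 0)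
    (hnn : ∀ k : ℕ, |x (k + 1) - x k| = 1)
    (hinf : Tendsto (fun k => (x k : ℝ)) atTop atTop)
    (T : ℕ → ℕ) (hT : ∀ n : ℕ, T n = sInf {k : ℕ | x k = (n : ℤ)})
    (C : ℝ) (hC : 0 < C) (n₁ : ℕ)
    (hback : ∀ n ≥ n₁, ∀ k : ℕ, (n : ℝ) - C * Real.log n ≤ (x (T n + k) : ℝ))
    (a : ℝ) (ha : 0 < a) :
    Tendsto (fun n : ℕ => Real.log (T n) / Real.log n) atTop (nhds (1 / a)) ↔
      Tendsto (fun n : ℕ => Real.log (x n : ℝ) / Real.log n) atTop (nhds a) := by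
  classical
  -- Discrete intermediate value theorem
  have ivt : ∀ (m K : ℕ), (m : ℤ) ≤ x K → ∃ j ≤ K, x j = (m : ℤ) := by
    intro m K hK
    have hex : ∃ k, (m : ℤ) ≤ x k := ⟨K, hK⟩
    have hk₀ : (m : ℤ) ≤ x (Nat.find hex) := Nat.find_spec hex
    have hk₀K : Nat.find hex ≤ K := Nat.find_min' hex hK
    rcases Nat.eq_zero_or_pos (Nat.find hex) with h0 | hpos
    · refine ⟨0, Nat.zero_le K, ?_⟩
      rw [h0, hx0] at hk₀
      rw [hx0]; omega
    · obtain ⟨j, hj⟩ : ∃ j, Nat.find hex = j + 1 := ⟨Nat.find hex - 1, by omega⟩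
      have hjlt : ¬ ((m : ℤ) ≤ x j) := Nat.find_min hex (by omega)
      have hstep : x (j + 1) - x j ≤ 1 := le_of_abs_le (le_of_eq (hnn j))
      rw [hj] at hk₀ hk₀K
      exact ⟨j + 1, hk₀K, by omega⟩
  -- every level is hit
  have hits : ∀ n : ℕ, ∃ k, x k = (n : ℤ) := by
    intro n
    obtain ⟨K, hK⟩ := (hinf.eventually_ge_atTop (n : ℝ)).exists
    obtain ⟨j, _, hj⟩ := ivt n K (by exact_mod_cast hK)
    exact ⟨j, hj⟩
  have hTmem : ∀ n : ℕ, x (T n) = (n : ℤ) := by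
    intro n; rw [hT n]; exact Nat.sInf_mem (hits n)
  have hTle : ∀ (n k : ℕ), x k = (n : ℤ) → T n ≤ k := by
    intro n k hk; rw [hT n]; exact Nat.sInf_le hk
  -- |x k| ≤ k
  have habs : ∀ k, |x k| ≤ (k : ℤ) := by
    intro k
    induction k with
    | zero => simp [hx0]
    | succ k ih =>
      have h1 := hnn k
      have : |x (k + 1)| ≤ |x k| + |x (k + 1) - x k| := by
        calc |x (k + 1)| = |x k + (x (k + 1) - x k)| := by ring_nf
          _ ≤ |x k| + |x (k + 1) - x k| := abs_add_le _ _
      rw [h1] at this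
      push_cast
      omega
  have hTge : ∀ n, n ≤ T n := by
    intro n
    have h1 := habs (T n)
    rw [hTmem n] at h1
    simpa using h1
  have hTtop : Tendsto T atTop atTop := tendsto_atTop_mono hTge tendsto_id
  constructor
  · -- forward direction
    intro h1
    have hg : Tendsto (fun n : ℕ => Real.log n / Real.log (T n)) atTop (nhds a) := by
      have := h1.inv₀ (by positivity)
      simp only [inv_div, one_div, inv_inv] at this
      exact this
    -- running maximum
    set M : ℕ → ℕ := fun k => (Finset.range (k + 1)).sup (fun j => (x j).toNat) with hM
    have hMle : ∀ j k, j ≤ k → (x j).toNat ≤ M k := by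
      intro j k hjk
      exact Finset.le_sup (f := fun j => (x j).toNat) (Finset.mem_range.mpr (Nat.lt_succ_of_le hjk))
    have hxM : ∀ k, x k ≤ (M k : ℤ) := by
      intro k
      exact (Int.self_le_toNat _).trans (by exact_mod_cast hMle k k le_rfl)
    have hTM : ∀ k, T (M k) ≤ k := by
      intro k
      obtain ⟨j, hj, hje⟩ := Finset.exists_mem_eq_sup (Finset.range (k + 1))
        Finset.nonempty_range_add_one (fun j => (x j).toNat)
      have hjk : j ≤ k := by have := Finset.mem_range.mp hj; omega
      by_cases hM0 : M k = 0
      · rw [hM0]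
        exact (hTle 0 0 (by simp [hx0])).trans (Nat.zero_le k)
      · have hxj : x j = (M k : ℤ) := by
          have : M k = (x j).toNat := hje
          omega
        exact (hTle _ j hxj).trans hjk
    have hkT : ∀ k, k < T (M k + 1) := by
      intro k
      by_contra hcon
      push_neg at hcon
      have h2 := hMle (T (M k + 1)) k hcon
      have h3 := hTmem (M k + 1)
      push_cast at h3
      omega
    have hMtop : Tendsto M atTop atTop := by
      apply tendsto_atTop_mono (fun k => hMle k k le_rfl)
      rw [tendsto_atTop_atTop]
      intro b
      obtain ⟨N, hN⟩ := (eventually_atTop.mp (hinf.eventually_ge_atTop (b : ℝ)))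
      refine ⟨N, fun k hk => ?_⟩
      have : (b : ℤ) ≤ x k := by exact_mod_cast hN k hk
      omega
    -- the corrector function
    set w : ℕ → ℝ := fun n => (n : ℝ) - C * Real.log n with hw
    have hlogdiv : Tendsto (fun n : ℕ => Real.log n / (n : ℝ)) atTop (nhds 0) := by
      have := Real.isLittleO_log_id_atTop.tendsto_div_nhds_zero
      exact (this.comp tendsto_natCast_atTop_atTop)
    have hw1 : Tendsto (fun n : ℕ => w n / n) atTop (nhds 1) := by
      have h2 : Tendsto (fun n : ℕ => 1 - C * (Real.log n / n)) atTop (nhds 1) := by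
        have := tendsto_const_nhds (x := (1:ℝ)) (f := atTop (α := ℕ))
        have := this.sub (hlogdiv.const_mul C)
        simpa using this
      apply h2.congr'
      filter_upwards [eventually_ge_atTop 1] with n hn
      have : (n : ℝ) ≠ 0 := by positivity
      field_simp [hw]
      rfl
    have hwtop : Tendsto w atTop atTop := by
      have hhalf : Tendsto (fun n : ℕ => (n : ℝ) / 2) atTop atTop :=
        (tendsto_natCast_atTop_atTop (R := ℝ)).atTop_div_const (by norm_num)
      apply tendsto_atTop_mono' atTop ?_ hhalf
      filter_upwards [hw1.eventually (eventually_gt_nhds (by norm_num : (1:ℝ)/2 < 1)),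
        eventually_ge_atTop 1] with n hn hn1
      have hnpos : (0:ℝ) < n := by
        have : (1:ℝ) ≤ n := by exact_mod_cast hn1
        linarith
      have := (lt_div_iff₀ hnpos).mp hn
      linarith
    -- limits of the bounding sequences
    have hU : Tendsto (fun k => Real.log (M k) / Real.log (T (M k))) atTop (nhds a) :=
      hg.comp hMtop
    have hgl : Tendsto (fun n : ℕ => Real.log (w n) / Real.log (T (n + 1))) atTop (nhds a) := by
      have f1 : Tendsto (fun n : ℕ => Real.log (w n) / Real.log n) atTop (nhds 1) :=
        aux_log_ratio w hw1
      have f2' : Tendsto (fun n : ℕ => Real.log ((n : ℝ) + 1) / Real.log n) atTop (nhds 1) := by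
        have := aux_log_ratio (fun n : ℕ => (n : ℝ) + 1) ?_
        · exact this
        · have h2 : Tendsto (fun n : ℕ => 1 + 1 / (n : ℝ)) atTop (nhds 1) := by
            have := tendsto_one_div_atTop_nhds_zero_nat (𝕜 := ℝ)
            simpa using (tendsto_const_nhds (x := (1:ℝ)) (f := atTop (α := ℕ))).add this
          apply h2.congr'
          filter_upwards [eventually_ge_atTop 1] with n hn
          have : (n : ℝ) ≠ 0 := by positivity
          field_simp
      have f2 : Tendsto (fun n : ℕ => Real.log n / Real.log ((n : ℝ) + 1)) atTop (nhds 1) := by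
        have := f2'.inv₀ one_ne_zero
        simpa [inv_div] using this
      have f3 : Tendsto (fun n : ℕ => Real.log ((n : ℝ) + 1) / Real.log (T (n + 1)))
          atTop (nhds a) := by
        have := hg.comp (tendsto_add_atTop_nat 1)
        apply this.congr
        intro n
        simp only [Function.comp_apply]
        norm_num
      have := (f1.mul f2).mul f3
      rw [show (1:ℝ) * 1 * a = a by ring] at this
      apply this.congr'
      filter_upwards [eventually_ge_atTop 2] with n hn
      have hn1 : (1:ℝ) < n := by
        have : (2:ℝ) ≤ n := by exact_mod_cast hn
        linarith
      have hlogn : Real.log n ≠ 0 := ne_of_gt (Real.log_pos hn1)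
      have hlogn1 : Real.log ((n:ℝ) + 1) ≠ 0 := ne_of_gt (Real.log_pos (by linarith))
      field_simp
    have hL : Tendsto (fun k => Real.log (w (M k)) / Real.log (T (M k + 1))) atTop (nhds a) :=
      hgl.comp hMtop
    -- squeeze
    have hMev : ∀ᶠ n : ℕ in atTop, n ≥ n₁ ∧ n ≥ 2 ∧ 1 ≤ w n := by
      filter_upwards [eventually_ge_atTop n₁, eventually_ge_atTop 2,
        hwtop.eventually_ge_atTop 1] with n e1 e2 e3
      exact ⟨e1, e2, e3⟩
    refine tendsto_of_tendsto_of_tendsto_of_le_of_le' hL hU ?_ ?_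
    · filter_upwards [hMtop.eventually hMev, eventually_ge_atTop 2] with k hMk hk2
      obtain ⟨c1, c2, c3⟩ := hMk
      -- lower bound on x k from hback
      have hxlow : w (M k) ≤ (x k : ℝ) := by
        have := hback (M k) c1 (k - T (M k))
        rwa [Nat.add_sub_cancel' (hTM k)] at this
      have hxk1 : (1:ℝ) ≤ (x k : ℝ) := le_trans c3 hxlow
      have hlogk : 0 < Real.log k :=
        Real.log_pos (by exact_mod_cast Nat.lt_of_lt_of_le one_lt_two hk2)
      have hkpos : (0:ℝ) < k := by
        have : (2:ℝ) ≤ k := by exact_mod_cast hk2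
        linarith
      have hkTk : Real.log k ≤ Real.log (T (M k + 1)) := by
        apply Real.log_le_log hkpos
        exact_mod_cast le_of_lt (hkT k)
      apply div_le_div₀ (by linarith [Real.log_nonneg hxk1]) ?_ hlogk hkTk
      exact Real.log_le_log (by linarith) hxlow
    · filter_upwards [hMtop.eventually hMev, eventually_ge_atTop 2] with k hMk hk2
      obtain ⟨c1, c2, c3⟩ := hMk
      have hxlow : w (M k) ≤ (x k : ℝ) := by
        have := hback (M k) c1 (k - T (M k))
        rwa [Nat.add_sub_cancel' (hTM k)] at this
      have hxk1 : (1:ℝ) ≤ (x k : ℝ) := le_trans c3 hxlow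
      have hMk1 : (1:ℝ) ≤ (M k : ℝ) := by exact_mod_cast le_trans one_le_two c2
      have hTMpos : 0 < Real.log (T (M k)) := by
        apply Real.log_pos
        have : 2 ≤ T (M k) := le_trans c2 (hTge (M k))
        exact_mod_cast Nat.lt_of_lt_of_le one_lt_two this
      have hTMk : Real.log (T (M k)) ≤ Real.log k := by
        apply Real.log_le_log (by exact_mod_cast Nat.lt_of_lt_of_le Nat.zero_lt_two (le_trans c2 (hTge (M k))))
        exact_mod_cast hTM k
      apply div_le_div₀ (Real.log_nonneg hMk1) ?_ hTMpos hTMk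
      apply Real.log_le_log (by linarith)
      exact_mod_cast hxM k
  · -- backward direction
    intro h2
    have h3 : Tendsto (fun n : ℕ => Real.log n / Real.log (T n)) atTop (nhds a) := by
      have := h2.comp hTtop
      apply this.congr
      intro n
      simp only [Function.comp_apply, hTmem n, Int.cast_natCast]
    have := h3.inv₀ (ne_of_gt ha)
    simpa [inv_div, one_div] using this
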